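/- Let U ⊆ ℝⁿ be open and convex, let φ₀, φ₁ : U → ℝ be continuously differentiable, let W ⊆ ℝⁿ × (0,1) be open, and let ξ, η : W → U be differentiable maps satisfying for all (x,t) ∈ W: (1−t)·ξ(x,t) + t·η(x,t) = x and ∇φ₀(ξ(x,t)) = ∇φ₁(η(x,t)). Define u : W → ℝ by u(x,t) = (1−t)·φ₀(ξ(x,t)) + t·φ₁(η(x,t)). Then u is differentiable on W with spatial gradient ∇ₓu(x,t) = ∇φ₀(ξ(x,t)) = ∇φ₁(η(x,t)) and time derivative ∂ₜu(x,t) = φ₁(η(x,t)) − φ₀(ξ(x,t)) + ⟨∇φ₀(ξ(x,t)), ξ(x,t) − η(x,t)⟩. -/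

import Mathlib

open scoped Matrix

/-- The gradient of `φ : ℝⁿ → ℝ` at `x`, as the vector of partial derivatives. -/
noncomputable def grad {n : ℕ} (φ : (Fin n → ℝ) → ℝ) (x : Fin n → ℝ) : Fin n → ℝ :=
  fun i => fderiv ℝ φ x (Pi.single i 1)

lemma clm_dot {n : ℕ} (F : (Fin n → ℝ) →L[ℝ] ℝ) (w : Fin n → ℝ) :
    F w = ∑ i, w i * F (Pi.single i 1) := by
  conv_lhs => rw [← Finset.univ_sum_single w]
  rw [map_sum]
  congr 1; ext i
  rw [show (Pi.single i (w i) : Fin n → ℝ) = w i • (Pi.single i 1 : Fin n → ℝ) by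
    ext j; by_cases h : j = i <;> simp [Pi.single_apply, h]]
  rw [map_smul]; rfl


/-- First-order derivatives of the weak geodesic
`u(x,t) = (1-t)φ₀(ξ(x,t)) + tφ₁(η(x,t))` built from the affine segments:
the spatial gradient is `∇φ₀(ξ(x,t)) = ∇φ₁(η(x,t))` and the time derivative is
`φ₁(η) - φ₀(ξ) + ⟨∇φ₀(ξ), ξ - η⟩`. -/
theorem stmt19 (n : ℕ) (U : Set (Fin n → ℝ)) (hUo : IsOpen U) (hUc : Convex ℝ U)
    (φ₀ φ₁ : (Fin n → ℝ) → ℝ)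
    (hφ₀ : ContDiffOn ℝ 1 φ₀ U) (hφ₁ : ContDiffOn ℝ 1 φ₁ U)
    (W : Set ((Fin n → ℝ) × ℝ)) (hWo : IsOpen W)
    (hWt : ∀ p ∈ W, p.2 ∈ Set.Ioo (0 : ℝ) 1)
    (ξ η : (Fin n → ℝ) × ℝ → Fin n → ℝ)
    (hξU : ∀ p ∈ W, ξ p ∈ U) (hηU : ∀ p ∈ W, η p ∈ U)
    (hξd : ∀ p ∈ W, DifferentiableAt ℝ ξ p)
    (hηd : ∀ p ∈ W, DifferentiableAt ℝ η p)
    (hseg : ∀ p ∈ W, (1 - p.2) • ξ p + p.2 • η p = p.1)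
    (hgrad : ∀ p ∈ W, grad φ₀ (ξ p) = grad φ₁ (η p))
    (u : (Fin n → ℝ) × ℝ → ℝ)
    (hu : ∀ p : (Fin n → ℝ) × ℝ, u p = (1 - p.2) * φ₀ (ξ p) + p.2 * φ₁ (η p)) :
    ∀ p ∈ W,
      DifferentiableAt ℝ u p ∧
      grad (fun y => u (y, p.2)) p.1 = grad φ₀ (ξ p) ∧
      grad (fun y => u (y, p.2)) p.1 = grad φ₁ (η p) ∧
      deriv (fun s => u (p.1, s)) p.2 =
        φ₁ (η p) - φ₀ (ξ p) + grad φ₀ (ξ p) ⬝ᵥ (ξ p - η p) := by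
  intro p hp
  have hWnhds : W ∈ nhds p := hWo.mem_nhds hp
  have hξd' := (hξd p hp).hasFDerivAt
  have hηd' := (hηd p hp).hasFDerivAt
  have hφ₀d : DifferentiableAt ℝ φ₀ (ξ p) :=
    (hφ₀.contDiffAt (hUo.mem_nhds (hξU p hp))).differentiableAt one_ne_zero
  have hφ₁d : DifferentiableAt ℝ φ₁ (η p) :=
    (hφ₁.contDiffAt (hUo.mem_nhds (hηU p hp))).differentiableAt one_ne_zero
  set F₀ := fderiv ℝ φ₀ (ξ p) with hF₀def
  set F₁ := fderiv ℝ φ₁ (η p) with hF₁def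
  set Dξ := fderiv ℝ ξ p with hDξdef
  set Dη := fderiv ℝ η p with hDηdef
  have hSnd : HasFDerivAt (fun q : (Fin n → ℝ) × ℝ => q.2)
      (ContinuousLinearMap.snd ℝ (Fin n → ℝ) ℝ) p := hasFDerivAt_snd
  have hc₁ : HasFDerivAt (fun q : (Fin n → ℝ) × ℝ => 1 - q.2)
      (-(ContinuousLinearMap.snd ℝ (Fin n → ℝ) ℝ)) p := by
    have h0 := (hasFDerivAt_const (1:ℝ) p).sub hSnd
    rwa [zero_sub] at h0
  -- derivative of the segment constraint
  have hsegD : HasFDerivAt (fun q => (1 - q.2) • ξ q + q.2 • η q)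
      (((1 - p.2) • Dξ + (-(ContinuousLinearMap.snd ℝ (Fin n → ℝ) ℝ)).smulRight (ξ p)) +
       (p.2 • Dη + (ContinuousLinearMap.snd ℝ (Fin n → ℝ) ℝ).smulRight (η p))) p :=
    (hc₁.smul hξd').add (hSnd.smul hηd')
  have hev : (fun q => (1 - q.2) • ξ q + q.2 • η q) =ᶠ[nhds p] Prod.fst :=
    Filter.eventually_of_mem hWnhds (fun q hq => hseg q hq)
  have hDsum : (((1 - p.2) • Dξ + (-(ContinuousLinearMap.snd ℝ (Fin n → ℝ) ℝ)).smulRight (ξ p)) +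
       (p.2 • Dη + (ContinuousLinearMap.snd ℝ (Fin n → ℝ) ℝ).smulRight (η p))) =
      ContinuousLinearMap.fst ℝ (Fin n → ℝ) ℝ :=
    hsegD.unique ((hasFDerivAt_fst (p := p)).congr_of_eventuallyEq hev)
  have hkey : ∀ w : (Fin n → ℝ) × ℝ,
      (1 - p.2) • Dξ w + p.2 • Dη w = w.1 + w.2 • (ξ p - η p) := by
    intro w
    have h := congrArg (fun L : ((Fin n → ℝ) × ℝ) →L[ℝ] (Fin n → ℝ) => L w) hDsum
    simp only [ContinuousLinearMap.add_apply, ContinuousLinearMap.smul_apply,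
      ContinuousLinearMap.smulRight_apply, ContinuousLinearMap.neg_apply,
      ContinuousLinearMap.coe_snd', ContinuousLinearMap.coe_fst'] at h
    have h2 : (1 - p.2) • Dξ w + p.2 • Dη w =
        ((1 - p.2) • Dξ w + -w.2 • ξ p + (p.2 • Dη w + w.2 • η p)) +
          w.2 • (ξ p - η p) := by module
    rw [h2, h]
  have hsing : ∀ v, F₁ v = F₀ v := by
    intro v
    rw [clm_dot F₁ v, clm_dot F₀ v]
    refine Finset.sum_congr rfl fun i _ => ?_
    have hgi := congrFun (hgrad p hp) i
    simp only [grad] at hgi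
    rw [← hF₀def, ← hF₁def] at hgi
    rw [hgi]
  have h₀c : HasFDerivAt (fun q => φ₀ (ξ q)) (F₀.comp Dξ) p :=
    HasFDerivAt.comp p hφ₀d.hasFDerivAt hξd'
  have h₁c : HasFDerivAt (fun q => φ₁ (η q)) (F₁.comp Dη) p :=
    HasFDerivAt.comp p hφ₁d.hasFDerivAt hηd'
  set Du := ((1 - p.2) • (F₀.comp Dξ) +
        (φ₀ (ξ p)) • (-(ContinuousLinearMap.snd ℝ (Fin n → ℝ) ℝ))) +
      (p.2 • (F₁.comp Dη) + (φ₁ (η p)) • (ContinuousLinearMap.snd ℝ (Fin n → ℝ) ℝ))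
    with hDudef
  have hDu : HasFDerivAt u Du p := by
    rw [show u = fun q => (1 - q.2) * φ₀ (ξ q) + q.2 * φ₁ (η q) from funext hu]
    exact (hc₁.mul h₀c).add (hSnd.mul h₁c)
  have hDuw : ∀ w : (Fin n → ℝ) × ℝ,
      Du w = w.2 * (φ₁ (η p) - φ₀ (ξ p)) + F₀ (w.1 + w.2 • (ξ p - η p)) := by
    intro w
    have h1 : F₀ (w.1 + w.2 • (ξ p - η p)) = (1 - p.2) * F₀ (Dξ w) + p.2 * F₀ (Dη w) := by
      rw [← hkey w]; simp
    simp only [hDudef, ContinuousLinearMap.add_apply, ContinuousLinearMap.smul_apply,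
      ContinuousLinearMap.comp_apply, ContinuousLinearMap.neg_apply,
      ContinuousLinearMap.coe_snd', smul_eq_mul, hsing]
    rw [h1]; ring
  have hrest : HasFDerivAt (fun y => u (y, p.2))
      (Du.comp (ContinuousLinearMap.inl ℝ (Fin n → ℝ) ℝ)) p.1 :=
    HasFDerivAt.comp p.1 hDu (hasFDerivAt_prodMk_left p.1 p.2)
  have hgr : grad (fun y => u (y, p.2)) p.1 = grad φ₀ (ξ p) := by
    funext i
    show fderiv ℝ (fun y => u (y, p.2)) p.1 (Pi.single i 1) = F₀ (Pi.single i 1)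
    rw [hrest.fderiv]
    rw [show (Du.comp (ContinuousLinearMap.inl ℝ (Fin n → ℝ) ℝ)) (Pi.single i 1)
        = Du ((Pi.single i 1 : Fin n → ℝ), (0:ℝ)) from rfl]
    rw [hDuw]
    simp
  have hdot : F₀ (ξ p - η p) = grad φ₀ (ξ p) ⬝ᵥ (ξ p - η p) := by
    rw [clm_dot]
    simp only [dotProduct, grad]
    rw [← hF₀def]
    exact Finset.sum_congr rfl fun i _ => mul_comm _ _
  have htime : HasDerivAt (fun s => u (p.1, s)) (Du ((0 : Fin n → ℝ), (1:ℝ))) p.2 :=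
    hDu.comp_hasDerivAt p.2 ((hasDerivAt_const p.2 p.1).prodMk (hasDerivAt_id p.2))
  refine ⟨hDu.differentiableAt, hgr, hgr.trans (hgrad p hp), ?_⟩
  rw [htime.deriv, hDuw ((0 : Fin n → ℝ), (1:ℝ))]
  simp [hdot]
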